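/- Weyl's majorant inequality: Let A be an n×n complex matrix with eigenvalues λ₁, …, λₙ (with multiplicity) and let p ≥ 1. Then Σᵢ |λᵢ|^p ≤ trace |A|^p. -/

import Mathlib

open Matrix

/-- Singular values of a complex square matrix: the square roots of the
eigenvalues of `Aᴴ * A` (i.e. the eigenvalues of `|A| = (Aᴴ A)^(1/2)`). -/
noncomputable def singVal {n : ℕ} (A : Matrix (Fin n) (Fin n) ℂ) : Fin n → ℝ :=
  fun i => Real.sqrt ((Matrix.isHermitian_conjTranspose_mul_self A).eigenvalues i)

/-- `trace |A|^p = ∑ sᵢ(A)^p`. -/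
noncomputable def traceAbsPow {n : ℕ} (A : Matrix (Fin n) (Fin n) ℂ) (p : ℝ) : ℝ :=
  ∑ i, singVal A i ^ p

/-- The Schatten `p`-norm `‖A‖_p = (trace |A|^p)^(1/p)`. -/
noncomputable def schattenNorm {n : ℕ} (A : Matrix (Fin n) (Fin n) ℂ) (p : ℝ) : ℝ :=
  traceAbsPow A p ^ (1 / p)

section WeylAux
open Polynomial Finset
open scoped ComplexOrder

lemma charpoly_conj_unitary {n : ℕ} (A : Matrix (Fin n) (Fin n) ℂ)
    (U : Matrix (Fin n) (Fin n) ℂ) (hU : U ∈ Matrix.unitaryGroup (Fin n) ℂ) :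
    (star U * A * U).charpoly = A.charpoly := by
  have h1 : star U * U = 1 := (Unitary.mem_iff.mp hU).1
  have hmap : ∀ (M N : Matrix (Fin n) (Fin n) ℂ),
      (M * N).map (C : ℂ →+* ℂ[X]) = M.map C * N.map C := fun M N =>
    Matrix.map_mul
  have h2 : U * star U = 1 := (Unitary.mem_iff.mp hU).2
  have comm : ∀ (M : Matrix (Fin n) (Fin n) ℂ[X]),
      M * Matrix.scalar (Fin n) X = Matrix.scalar (Fin n) X * M := fun M =>
    (Matrix.scalar_commute _ (fun r => Commute.all _ _) M).symm
  have hcm : charmatrix (star U * A * U)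
      = (star U).map (C : ℂ →+* ℂ[X]) * charmatrix A * U.map C := by
    unfold charmatrix
    simp only [RingHom.mapMatrix_apply]
    rw [Matrix.mul_sub, Matrix.sub_mul, hmap, hmap]
    congr 1
    · rw [Matrix.mul_assoc, ← comm, ← Matrix.mul_assoc, ← hmap, h1,
      Matrix.map_one _ (map_zero C) (map_one C), Matrix.one_mul]
  unfold Matrix.charpoly
  rw [hcm, Matrix.det_mul, Matrix.det_mul, mul_comm, ← mul_assoc, ← Matrix.det_mul, ← hmap, h2]
  simp

lemma jensen_substochastic {n : ℕ} (c x : Fin n → ℝ) (hc : ∀ i, 0 ≤ c i)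
    (hx : ∀ i, 0 ≤ x i) (hsum : ∑ i, c i ≤ 1) {p : ℝ} (hp : 1 ≤ p) :
    (∑ i, c i * x i) ^ p ≤ ∑ i, c i * x i ^ p := by
  set S := ∑ i, c i with hS
  rcases eq_or_lt_of_le (Finset.sum_nonneg fun i _ => hc i) with h0 | h0
  · have hzero : ∀ i ∈ Finset.univ, c i = 0 := by
      intro i _
      refine le_antisymm ?_ (hc i)
      by_contra h
      push_neg at h
      have := Finset.single_le_sum (f := c) (fun j _ => hc j) (Finset.mem_univ i)
      rw [← hS] at this; nlinarith [hc i]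
    have l1 : (∑ i, c i * x i) = 0 :=
      Finset.sum_eq_zero fun i hi => by rw [hzero i hi, zero_mul]
    have l2 : (∑ i, c i * x i ^ p) = 0 :=
      Finset.sum_eq_zero fun i hi => by rw [hzero i hi, zero_mul]
    rw [l1, l2, Real.zero_rpow (by linarith : p ≠ 0)]
  · -- 0 < S
    have hSne : S ≠ 0 := ne_of_gt h0
    have key := Real.rpow_arith_mean_le_arith_mean_rpow Finset.univ
      (fun i => c i / S) x (fun i _ => div_nonneg (hc i) h0.le)
      (by rw [← Finset.sum_div, ← hS, div_self hSne]) (fun i _ => hx i) hp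
    have e1 : ∑ i, c i / S * x i = (∑ i, c i * x i) / S := by
      rw [Finset.sum_div]; exact Finset.sum_congr rfl fun i _ => by ring
    have e2 : ∑ i, c i / S * x i ^ p = (∑ i, c i * x i ^ p) / S := by
      rw [Finset.sum_div]; exact Finset.sum_congr rfl fun i _ => by ring
    rw [e1, e2] at key
    have hcx : 0 ≤ ∑ i, c i * x i := Finset.sum_nonneg fun i _ => mul_nonneg (hc i) (hx i)
    have hdiv : (∑ i, c i * x i) ^ p = S ^ p * ((∑ i, c i * x i) / S) ^ p := by
      rw [← Real.mul_rpow h0.le (div_nonneg hcx h0.le), mul_div_cancel₀ _ hSne]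
    have hSp : S ^ p ≤ S := by
      calc S ^ p ≤ S ^ (1:ℝ) := Real.rpow_le_rpow_of_exponent_ge h0 hsum hp
      _ = S := Real.rpow_one S
    have hq : 0 ≤ ((∑ i, c i * x i) / S) ^ p := Real.rpow_nonneg (div_nonneg hcx h0.le) p
    calc (∑ i, c i * x i) ^ p = S ^ p * ((∑ i, c i * x i) / S) ^ p := hdiv
      _ ≤ S * ((∑ i, c i * x i) / S) ^ p := mul_le_mul_of_nonneg_right hSp hq
      _ ≤ S * ((∑ i, c i * x i ^ p) / S) := mul_le_mul_of_nonneg_left key h0.le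
      _ = ∑ i, c i * x i ^ p := mul_div_cancel₀ _ hSne

lemma schur_triangularize : ∀ (n : ℕ) (A : Matrix (Fin n) (Fin n) ℂ),
    ∃ U ∈ Matrix.unitaryGroup (Fin n) ℂ,
      ∀ i j : Fin n, j < i → (star U * A * U) i j = 0 := by
  intro n
  induction n with
  | zero =>
    intro A
    exact ⟨1, Submonoid.one_mem _, fun i j _ => i.elim0⟩
  | succ n ih =>
    intro A
    -- find a unit eigenvector
    obtain ⟨μ, hμ⟩ := Module.End.exists_eigenvalue (Matrix.mulVecLin A)
    obtain ⟨v, hv⟩ := hμ.exists_hasEigenvector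
    -- regard v as element of EuclideanSpace
    have hvne : v ≠ 0 := hv.right
    set ve : EuclideanSpace ℂ (Fin (n + 1)) :=
      (WithLp.equiv 2 (Fin (n + 1) → ℂ)).symm v with hve
    have hvne' : ve ≠ 0 := by
      intro h
      exact hvne ((WithLp.equiv 2 (Fin (n + 1) → ℂ)).symm.injective (by rw [← hve, h]; simp))
    have hnv : ‖ve‖ ≠ 0 := norm_ne_zero_iff.mpr hvne'
    set w : EuclideanSpace ℂ (Fin (n + 1)) := (‖ve‖⁻¹ : ℂ) • ve with hw
    have hwnorm : ‖w‖ = 1 := by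
      rw [hw, norm_smul]
      simp only [norm_inv, Complex.norm_real, Real.norm_eq_abs, abs_norm]
      exact inv_mul_cancel₀ hnv
    have hAw : A *ᵥ ((WithLp.equiv 2 (Fin (n+1) → ℂ)) w)
        = μ • ((WithLp.equiv 2 (Fin (n+1) → ℂ)) w) := by
      have hAv : A *ᵥ v = μ • v := hv.apply_eq_smul
      show A *ᵥ ((‖ve‖⁻¹ : ℂ) • v) = μ • ((‖ve‖⁻¹ : ℂ) • v)
      rw [Matrix.mulVec_smul, hAv, smul_comm]
    -- orthonormal basis extending w
    have hcard : Module.finrank ℂ (EuclideanSpace ℂ (Fin (n + 1)))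
        = Fintype.card (Fin (n + 1)) := by
      simp [finrank_euclideanSpace]
    have horth : Orthonormal ℂ (Set.restrict {(0 : Fin (n+1))} (fun _ => w)) := by
      rw [orthonormal_iff_ite]
      rintro ⟨i, hi⟩ ⟨j, hj⟩
      simp only [Set.mem_singleton_iff] at hi hj
      subst hi; subst hj
      simp [inner_self_eq_norm_sq_to_K, hwnorm]
      exact Or.inl hwnorm
    obtain ⟨b, hb⟩ := horth.exists_orthonormalBasis_extension_of_card_eq hcard
    have hb0 : b 0 = w := hb 0 rfl
    set U : Matrix (Fin (n+1)) (Fin (n+1)) ℂ :=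
      (EuclideanSpace.basisFun (Fin (n+1)) ℂ).toBasis.toMatrix b.toBasis with hU
    have hUmem : U ∈ Matrix.unitaryGroup (Fin (n+1)) ℂ :=
      (EuclideanSpace.basisFun (Fin (n+1)) ℂ).toMatrix_orthonormalBasis_mem_unitary b
    have hUapp : ∀ i j, U i j = b j i := fun i j => rfl
    have hUmul : ∀ j, U *ᵥ Pi.single j 1 = ⇑(b j) := by
      intro j
      ext i
      simp [Matrix.mulVec_single, hUapp]
    have hUstar : ∀ j, (star U) *ᵥ ⇑(b j) = Pi.single j 1 := by
      intro j
      rw [← hUmul, Matrix.mulVec_mulVec, (Unitary.mem_iff.mp hUmem).1, Matrix.one_mulVec]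
    set M : Matrix (Fin (n+1)) (Fin (n+1)) ℂ := star U * A * U with hM
    have hM0 : ∀ i : Fin (n+1), i ≠ 0 → M i 0 = 0 := by
      have hcol : M *ᵥ (Pi.single 0 1 : Fin (n+1) → ℂ)
          = μ • (Pi.single 0 1 : Fin (n+1) → ℂ) := by
        show (star U * A * U) *ᵥ _ = _
        rw [← Matrix.mulVec_mulVec, ← Matrix.mulVec_mulVec, hUmul 0, hb0, (show A *ᵥ w.ofLp = μ • w.ofLp from hAw),
          Matrix.mulVec_smul, ← hb0, hUstar 0]
      intro i hi
      have := congrFun hcol i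
      simpa [Pi.single_apply, hi] using this
    -- recurse on lower-right block
    obtain ⟨V', hV'mem, hV'tri⟩ := ih (M.submatrix Fin.succ Fin.succ)
    set V : Matrix (Fin (n+1)) (Fin (n+1)) ℂ :=
      Matrix.of (Fin.cons (fun j => if j = 0 then 1 else 0)
        (fun i' => Fin.cons 0 (fun j' => V' i' j'))) with hVdef
    have hV00 : V 0 0 = 1 := by simp [hVdef]
    have hV0s : ∀ j' : Fin n, V 0 j'.succ = 0 := by
      intro j'; simp [hVdef, Fin.succ_ne_zero]
    have hVs0 : ∀ i' : Fin n, V i'.succ 0 = 0 := by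
      intro i'; simp [hVdef]
    have hVss : ∀ i' j' : Fin n, V i'.succ j'.succ = V' i' j' := by
      intro i' j'; simp [hVdef]
    have hV'unit : star V' * V' = 1 := (Unitary.mem_iff.mp hV'mem).1
    have hVmem : V ∈ Matrix.unitaryGroup (Fin (n+1)) ℂ := by
      rw [Matrix.mem_unitaryGroup_iff']
      ext i j
      rw [Matrix.mul_apply, Fin.sum_univ_succ]
      simp only [Matrix.star_apply]
      refine Fin.cases ?_ (fun i' => ?_) i <;> refine Fin.cases ?_ (fun j' => ?_) j
      · simp [hV00, hVs0]
      · simp [hV00, hV0s, hVs0, Matrix.one_apply, Ne.symm (Fin.succ_ne_zero j')]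
      · simp [hV00, hV0s, hVs0, Matrix.one_apply, Fin.succ_ne_zero i']
      · have hthis := congrFun (congrFun hV'unit i') j'
        rw [Matrix.mul_apply] at hthis
        simp only [Matrix.star_apply] at hthis
        simp only [hV0s, hVss, star_zero, zero_mul, mul_zero, zero_add]
        rw [hthis]
        by_cases h : i' = j'
        · subst h; simp
        · simp [Matrix.one_apply, h, fun hh => h (Fin.succ_injective _ hh)]
    refine ⟨U * V, Submonoid.mul_mem _ hUmem hVmem, ?_⟩
    have hsplit : star (U * V) * A * (U * V) = star V * M * V := by
      rw [hM, StarMul.star_mul]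
      noncomm_ring
    rw [hsplit]
    -- triangularity
    intro i j hij
    rcases Fin.eq_zero_or_eq_succ i with rfl | ⟨i', rfl⟩
    · exact absurd hij (Fin.not_lt_zero j)
    have hcolM : ∀ i'' : Fin n, (star V * M) i''.succ 0 = 0 := by
      intro i''
      rw [Matrix.mul_apply, Fin.sum_univ_succ]
      simp only [Matrix.star_apply, hV0s, star_zero, zero_mul, zero_add]
      exact Finset.sum_eq_zero fun k _ => by
        rw [hM0 _ (Fin.succ_ne_zero k), mul_zero]
    rcases Fin.eq_zero_or_eq_succ j with rfl | ⟨j', rfl⟩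
    · -- first column
      rw [Matrix.mul_apply, Fin.sum_univ_succ]
      simp only [hVs0, mul_zero, Finset.sum_const_zero, add_zero, hV00, mul_one]
      exact hcolM i'
    · -- both successors
      have hij' : j' < i' := by rwa [Fin.succ_lt_succ_iff] at hij
      have key : ∀ l : Fin n, (star V * M) i'.succ l.succ
          = (star V' * M.submatrix Fin.succ Fin.succ) i' l := by
        intro l
        rw [Matrix.mul_apply, Matrix.mul_apply, Fin.sum_univ_succ]
        simp only [Matrix.star_apply, hV0s, star_zero, zero_mul, zero_add,
          Matrix.submatrix_apply]
        exact Finset.sum_congr rfl fun k _ => by rw [hVss]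
      rw [Matrix.mul_apply, Fin.sum_univ_succ]
      simp only [hV0s, mul_zero, zero_add, hVss]
      have : ∑ l : Fin n, (star V * M) i'.succ l.succ * V' l j'
          = (star V' * M.submatrix Fin.succ Fin.succ * V') i' j' := by
        rw [Matrix.mul_apply]
        exact Finset.sum_congr rfl fun l _ => by rw [key l]
      rw [this]
      exact hV'tri i' j' hij'



lemma herm_charpoly_roots {n : ℕ} {M : Matrix (Fin n) (Fin n) ℂ} (hM : M.IsHermitian) :
    M.charpoly.roots = Multiset.map (fun i => (hM.eigenvalues i : ℂ)) Finset.univ.val := by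
  have h1 : (star (hM.eigenvectorUnitary : Matrix (Fin n) (Fin n) ℂ)) * M *
      (hM.eigenvectorUnitary : Matrix (Fin n) (Fin n) ℂ)
      = Matrix.diagonal (RCLike.ofReal ∘ hM.eigenvalues) := by
    rw [← Unitary.conjStarAlgAut_star_apply (S := ℂ)]; exact hM.conjStarAlgAut_star_eigenvectorUnitary
  have h2 := charpoly_conj_unitary M _ (hM.eigenvectorUnitary).2
  rw [h1] at h2
  rw [← h2, Matrix.charpoly_of_upperTriangular _ (Matrix.blockTriangular_diagonal _)]
  have h3 : ∏ i : Fin n, (X - C ((Matrix.diagonal (RCLike.ofReal ∘ hM.eigenvalues) : Matrix (Fin n) (Fin n) ℂ) i i))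
      = (Multiset.map (fun a => X - C a) (Multiset.map (fun i => (hM.eigenvalues i : ℂ)) Finset.univ.val)).prod := by
    rw [Multiset.map_map, Finset.prod]
    congr 1
    apply Multiset.map_congr rfl
    intro i _
    simp [Matrix.diagonal_apply_eq]
  rw [h3, Polynomial.roots_multiset_prod_X_sub_C]



lemma diag_abs_rpow_le {n : ℕ} (B : Matrix (Fin n) (Fin n) ℂ) {p : ℝ} (hp : 1 ≤ p) :
    ∑ i, ‖B i i‖ ^ p
      ≤ ∑ i, Real.sqrt ((Matrix.isHermitian_conjTranspose_mul_self B).eigenvalues i) ^ p := by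
  classical
  set hH := Matrix.isHermitian_conjTranspose_mul_self B with hHdef
  set μ : Fin n → ℝ := hH.eigenvalues with hμdef
  have hμ : ∀ i, 0 ≤ μ i := Matrix.eigenvalues_conjTranspose_mul_self_nonneg B
  set σ : Fin n → ℝ := fun i => Real.sqrt (μ i) with hσdef
  have hσ : ∀ i, 0 ≤ σ i := fun i => Real.sqrt_nonneg _
  have hσsq : ∀ i, σ i ^ 2 = μ i := fun i => Real.sq_sqrt (hμ i)
  set v : Fin n → Fin n → ℂ := fun j => ⇑(hH.eigenvectorBasis j) with hvdef
  set W : Matrix (Fin n) (Fin n) ℂ := (hH.eigenvectorUnitary : Matrix (Fin n) (Fin n) ℂ)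
    with hWdef
  have hWmem := hH.eigenvectorUnitary.2
  have hWapp : ∀ i j, W i j = v j i := fun i j => rfl
  -- orthonormality as dot products
  have horm : ∀ j k, star (v j) ⬝ᵥ (v k) = if j = k then 1 else 0 := by
    intro j k
    have := orthonormal_iff_ite.mp hH.eigenvectorBasis.orthonormal j k
    rw [EuclideanSpace.inner_eq_star_dotProduct, dotProduct_comm] at this
    exact this
  -- inner products of images
  have hBvBv : ∀ j k, star (B *ᵥ v j) ⬝ᵥ (B *ᵥ v k) = if j = k then (μ k : ℂ) else 0 := by
    intro j k
    rw [Matrix.star_mulVec, ← Matrix.dotProduct_mulVec, Matrix.mulVec_mulVec,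
      hH.mulVec_eigenvectorBasis k]
    rw [show (hH.eigenvalues k • ⇑(hH.eigenvectorBasis k) : Fin n → ℂ)
        = (μ k : ℂ) • (v k) from by
      funext i
      simp [hμdef, hvdef, Complex.real_smul]]
    rw [dotProduct_smul, horm j k]
    by_cases h : j = k <;> simp [h]
  have hBv0 : ∀ j, σ j = 0 → B *ᵥ v j = 0 := by
    intro j hj
    have hμ0 : μ j = 0 := by
      have := hσsq j
      rw [hj] at this
      simpa using this.symm
    have := hBvBv j j
    rw [if_pos rfl, hμ0] at this
    exact dotProduct_star_self_eq_zero.mp (by simpa using this)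
  set u : Fin n → Fin n → ℂ :=
    fun j => if σ j = 0 then 0 else ((σ j : ℂ))⁻¹ • (B *ᵥ v j) with hudef
  have hu0 : ∀ j, σ j = 0 → u j = 0 := fun j hj => by simp [hudef, hj]
  have hBu : ∀ j, B *ᵥ v j = (σ j : ℂ) • u j := by
    intro j
    by_cases hj : σ j = 0
    · rw [hBv0 j hj, hu0 j hj, smul_zero]
    · rw [hudef]
      simp only [hj, if_neg, ite_false]
      rw [smul_smul, mul_inv_cancel₀ (by exact_mod_cast hj), one_smul]
  have hσc : ∀ j, σ j ≠ 0 → ((σ j : ℂ)) ≠ 0 := fun j hj => by exact_mod_cast hj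
  have huu : ∀ j k, star (u j) ⬝ᵥ (u k)
      = if j = k then (if σ j = 0 then 0 else 1) else 0 := by
    intro j k
    by_cases hj : σ j = 0
    · rw [hu0 j hj]
      simp [hj, zero_dotProduct]
    by_cases hk : σ k = 0
    · rw [hu0 k hk]
      have : j = k → σ j = 0 := fun h => by rw [h]; exact hk
      simp only [dotProduct_zero]
      by_cases h : j = k
      · exact absurd (this h) hj
      · simp [h]
    · rw [hudef]
      simp only [hj, hk, ite_false]
      rw [star_smul, smul_dotProduct, dotProduct_smul, hBvBv j k]
      by_cases h : j = k
      · subst h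
        simp only [if_pos rfl, if_neg hj]
        rw [star_inv₀]
        rw [show star ((σ j : ℂ)) = (σ j : ℂ) from by
          simp [Complex.star_def, Complex.conj_ofReal]]
        have hne : ((σ j : ℂ)) ≠ 0 := hσc j hj
        rw [smul_eq_mul, smul_eq_mul, ← hσsq j]
        push_cast
        field_simp
      · simp [h]
  -- the matrix Q and projection P
  set Q : Matrix (Fin n) (Fin n) ℂ := Matrix.of (fun i j => u j i) with hQdef
  have hQapp : ∀ i j, Q i j = u j i := fun i j => rfl
  set ε : Fin n → ℂ := fun j => if σ j = 0 then 0 else 1 with hεdef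
  have hQQ : Qᴴ * Q = Matrix.diagonal ε := by
    ext j k
    rw [Matrix.mul_apply, Matrix.diagonal_apply]
    have : ∑ i, Qᴴ j i * Q i k = star (u j) ⬝ᵥ (u k) := by
      apply Finset.sum_congr rfl
      intro i _
      rw [Matrix.conjTranspose_apply, hQapp, hQapp]
      rfl
    rw [this, huu j k]
  have hQε : Q * Matrix.diagonal ε = Q := by
    ext i j
    rw [Matrix.mul_diagonal]
    by_cases h : σ j = 0
    · rw [hQapp, hu0 j h]
      simp [hεdef, h]
    · simp [hεdef, h]
  set P : Matrix (Fin n) (Fin n) ℂ := Q * Qᴴ with hPdef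
  have hPP : P * P = P := by
    rw [hPdef, Matrix.mul_assoc, ← Matrix.mul_assoc Qᴴ, hQQ, ← Matrix.mul_assoc, hQε]
  have hPherm : Pᴴ = P := by
    rw [hPdef, Matrix.conjTranspose_mul, Matrix.conjTranspose_conjTranspose]
  -- row sums of |u|²
  set rowU : Fin n → ℝ := fun i => ∑ j, ‖u j i‖ ^ 2 with hrowUdef
  have hPii : ∀ i, P i i = (rowU i : ℂ) := by
    intro i
    have h0 : P i i = ∑ j, (Complex.normSq (u j i) : ℂ) := by
      rw [hPdef, Matrix.mul_apply]
      refine Finset.sum_congr rfl fun j _ => ?_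
      rw [Matrix.conjTranspose_apply, hQapp, Complex.star_def, Complex.mul_conj]
    rw [h0, hrowUdef]
    push_cast
    refine Finset.sum_congr rfl fun j _ => ?_
    norm_cast
    exact (Complex.sq_norm _).symm
  have hrowU_nonneg : ∀ i, 0 ≤ rowU i :=
    fun i => Finset.sum_nonneg fun j _ => sq_nonneg _
  have hrowU : ∀ i, rowU i ≤ 1 := by
    intro i
    have h1 : (rowU i : ℂ) = ∑ k, (Complex.normSq (P i k) : ℂ) := by
      rw [← hPii i]
      conv_lhs => rw [← hPP]
      rw [Matrix.mul_apply]
      apply Finset.sum_congr rfl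
      intro k _
      have : P k i = star (P i k) := by
        conv_lhs => rw [← hPherm]
        rw [Matrix.conjTranspose_apply]
      rw [this, Complex.star_def, Complex.mul_conj]
    have h2 : rowU i = ∑ k, Complex.normSq (P i k) := by
      have := congrArg Complex.re h1
      simpa using this
    have h3 : Complex.normSq (P i i) = rowU i ^ 2 := by
      rw [hPii i, Complex.normSq_ofReal, sq]
    have h4 : Complex.normSq (P i i) ≤ ∑ k, Complex.normSq (P i k) :=
      Finset.single_le_sum (fun k _ => Complex.normSq_nonneg _) (Finset.mem_univ i)
    rw [h3, ← h2] at h4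
    nlinarith [hrowU_nonneg i]
  -- column sums of |u|²
  have hcolU : ∀ j, ∑ i, ‖u j i‖ ^ 2 ≤ 1 := by
    intro j
    have h1 : star (u j) ⬝ᵥ (u j) = ∑ i, (Complex.normSq (u j i) : ℂ) := by
      apply Finset.sum_congr rfl
      intro i _
      rw [Pi.star_apply, Complex.star_def, mul_comm, Complex.mul_conj]
    have h2 := huu j j
    rw [h1, if_pos rfl] at h2
    have h3 : ∑ i, Complex.normSq (u j i) = if σ j = 0 then (0:ℝ) else 1 := by
      have := congrArg Complex.re h2
      by_cases h : σ j = 0 <;> simpa [h] using this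
    calc ∑ i, ‖u j i‖ ^ 2 = ∑ i, Complex.normSq (u j i) := by
          apply Finset.sum_congr rfl; intro i _; rw [Complex.sq_norm]
      _ = if σ j = 0 then (0:ℝ) else 1 := h3
      _ ≤ 1 := by by_cases h : σ j = 0 <;> simp [h]
  -- rows and columns of W
  have hrowW : ∀ i, ∑ j, ‖W i j‖ ^ 2 = 1 := by
    intro i
    have h : (W * star W) i i = (1 : Matrix (Fin n) (Fin n) ℂ) i i := congrFun (congrFun ((Unitary.mem_iff.mp hWmem).2) i) i
    rw [Matrix.mul_apply] at h
    have h1 : ∑ j, W i j * star W j i = ∑ j, (Complex.normSq (W i j) : ℂ) := by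
      apply Finset.sum_congr rfl
      intro j _
      rw [Matrix.star_apply, Complex.star_def, Complex.mul_conj]
    rw [h1] at h
    have := congrArg Complex.re h
    simp only [Matrix.one_apply_eq, Complex.one_re] at this
    calc ∑ j, ‖W i j‖ ^ 2 = ∑ j, Complex.normSq (W i j) := by
          apply Finset.sum_congr rfl; intro j _; rw [Complex.sq_norm]
      _ = 1 := by simpa using this
  have hcolW : ∀ j, ∑ i, ‖W i j‖ ^ 2 = 1 := by
    intro j
    have h : (star W * W) j j = (1 : Matrix (Fin n) (Fin n) ℂ) j j := congrFun (congrFun ((Unitary.mem_iff.mp hWmem).1) j) j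
    rw [Matrix.mul_apply] at h
    have h1 : ∑ i, star W j i * W i j = ∑ i, (Complex.normSq (W i j) : ℂ) := by
      apply Finset.sum_congr rfl
      intro i _
      rw [Matrix.star_apply, Complex.star_def, mul_comm, Complex.mul_conj]
    rw [h1] at h
    have := congrArg Complex.re h
    simp only [Matrix.one_apply_eq, Complex.one_re] at this
    calc ∑ i, ‖W i j‖ ^ 2 = ∑ i, Complex.normSq (W i j) := by
          apply Finset.sum_congr rfl; intro i _; rw [Complex.sq_norm]
      _ = 1 := by simpa using this
  -- diagonal entries
  have hdiag : ∀ i, B i i = ∑ j, (σ j : ℂ) * (u j i * star (W i j)) := by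
    intro i
    have hB : B = B * (W * star W) := by rw [(Unitary.mem_iff.mp hWmem).2, Matrix.mul_one]
    conv_lhs => rw [hB]
    rw [← Matrix.mul_assoc, Matrix.mul_apply]
    apply Finset.sum_congr rfl
    intro j _
    have hBW : (B * W) i j = (B *ᵥ v j) i := by
      rw [Matrix.mul_apply, Matrix.mulVec, dotProduct]
      exact Finset.sum_congr rfl fun l _ => by rw [hWapp]
    rw [hBW, hBu j]
    rw [Matrix.star_apply]
    simp only [Pi.smul_apply, smul_eq_mul]
    ring
  -- the substochastic matrix
  set c : Fin n → Fin n → ℝ :=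
    fun i j => (‖u j i‖ ^ 2 + ‖W i j‖ ^ 2) / 2 with hcdef
  have hc_nonneg : ∀ i j, 0 ≤ c i j := fun i j => by positivity
  have hrowc : ∀ i, ∑ j, c i j ≤ 1 := by
    intro i
    rw [hcdef]
    simp only
    rw [← Finset.sum_div, Finset.sum_add_distrib]
    rw [hrowW i]
    have := hrowU i
    rw [hrowUdef] at this
    linarith
  have hcolc : ∀ j, ∑ i, c i j ≤ 1 := by
    intro j
    rw [hcdef]
    simp only
    rw [← Finset.sum_div, Finset.sum_add_distrib]
    rw [hcolW j]
    have := hcolU j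
    linarith
  have habs : ∀ i, ‖B i i‖ ≤ ∑ j, c i j * σ j := by
    intro i
    rw [hdiag i]
    calc ‖∑ j, (σ j : ℂ) * (u j i * star (W i j))‖
        ≤ ∑ j, ‖(σ j : ℂ) * (u j i * star (W i j))‖ :=
          norm_sum_le _ _
      _ ≤ ∑ j, c i j * σ j := by
          apply Finset.sum_le_sum
          intro j _
          rw [norm_mul, norm_mul, Complex.norm_real, Real.norm_eq_abs, abs_of_nonneg (hσ j)]
          have habsstar : ‖star (W i j)‖ = ‖W i j‖ := by
            rw [Complex.star_def, Complex.norm_conj]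
          rw [habsstar, hcdef]
          simp only
          have key : ‖u j i‖ * ‖W i j‖
              ≤ (‖u j i‖ ^ 2 + ‖W i j‖ ^ 2) / 2 := by
            nlinarith [sq_nonneg (‖u j i‖ - ‖W i j‖)]
          calc σ j * (‖u j i‖ * ‖W i j‖)
              ≤ σ j * ((‖u j i‖ ^ 2 + ‖W i j‖ ^ 2) / 2) :=
                mul_le_mul_of_nonneg_left key (hσ j)
            _ = (‖u j i‖ ^ 2 + ‖W i j‖ ^ 2) / 2 * σ j := by ring
  -- final chain
  have hp0 : (0:ℝ) ≤ p := le_trans zero_le_one hp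
  calc ∑ i, ‖B i i‖ ^ p
      ≤ ∑ i, (∑ j, c i j * σ j) ^ p := by
        apply Finset.sum_le_sum
        intro i _
        exact Real.rpow_le_rpow (norm_nonneg _) (habs i) hp0
    _ ≤ ∑ i, ∑ j, c i j * σ j ^ p := by
        apply Finset.sum_le_sum
        intro i _
        exact jensen_substochastic (c i) σ (hc_nonneg i) hσ (hrowc i) hp
    _ = ∑ j, (∑ i, c i j) * σ j ^ p := by
        rw [Finset.sum_comm]
        apply Finset.sum_congr rfl
        intro j _
        rw [Finset.sum_mul]
    _ ≤ ∑ j, σ j ^ p := by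
        apply Finset.sum_le_sum
        intro j _
        calc (∑ i, c i j) * σ j ^ p ≤ 1 * σ j ^ p :=
              mul_le_mul_of_nonneg_right (hcolc j) (Real.rpow_nonneg (hσ j) p)
          _ = σ j ^ p := one_mul _

end WeylAux

theorem stmt8 {n : ℕ} (A : Matrix (Fin n) (Fin n) ℂ) (p : ℝ) (hp : 1 ≤ p) :
    ((A.charpoly.roots.map fun z => ‖z‖ ^ p).sum) ≤ traceAbsPow A p := by
  obtain ⟨U, hUmem, hTtri⟩ := schur_triangularize n A
  set T : Matrix (Fin n) (Fin n) ℂ := star U * A * U with hTdef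
  have hchar : A.charpoly = T.charpoly := (charpoly_conj_unitary A U hUmem).symm
  have htri : T.BlockTriangular id := fun i j h => hTtri i j h
  have hroots : A.charpoly.roots = Multiset.map (fun i => T i i) Finset.univ.val := by
    rw [hchar, Matrix.charpoly_of_upperTriangular T htri]
    have h3 : ∏ i : Fin n, (Polynomial.X - Polynomial.C (T i i))
        = (Multiset.map (fun a => Polynomial.X - Polynomial.C a)
            (Multiset.map (fun i => T i i) Finset.univ.val)).prod := by
      rw [Multiset.map_map, Finset.prod]
      rfl
    rw [h3, Polynomial.roots_multiset_prod_X_sub_C]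
  have hLHS : ((A.charpoly.roots.map fun z => ‖z‖ ^ p).sum)
      = ∑ i, ‖T i i‖ ^ p := by
    rw [hroots, Multiset.map_map, Finset.sum]
    rfl
  have h2 : U * star U = 1 := (Unitary.mem_iff.mp hUmem).2
  have hTH : Tᴴ * T = star U * (Aᴴ * A) * U := by
    rw [hTdef, Matrix.star_eq_conjTranspose]
    have e1 : (Uᴴ * A * U)ᴴ * (Uᴴ * A * U) = Uᴴ * Aᴴ * (U * Uᴴ) * A * U := by
      rw [Matrix.conjTranspose_mul, Matrix.conjTranspose_mul,
        Matrix.conjTranspose_conjTranspose]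
      noncomm_ring
    rw [e1]
    rw [show U * Uᴴ = 1 from by rw [← Matrix.star_eq_conjTranspose]; exact h2]
    noncomm_ring
  have hcharH : (Tᴴ * T).charpoly = (Aᴴ * A).charpoly := by
    rw [hTH]
    exact charpoly_conj_unitary (Aᴴ * A) U hUmem
  have hms : Multiset.map (fun i => ((Matrix.isHermitian_conjTranspose_mul_self T).eigenvalues i))
        Finset.univ.val
      = Multiset.map (fun i => ((Matrix.isHermitian_conjTranspose_mul_self A).eigenvalues i))
        Finset.univ.val := by
    have h1 := herm_charpoly_roots (Matrix.isHermitian_conjTranspose_mul_self T)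
    have hA1 := herm_charpoly_roots (Matrix.isHermitian_conjTranspose_mul_self A)
    rw [hcharH] at h1
    have h3 := h1.symm.trans hA1
    have h4 : Multiset.map (fun x : ℝ => (x : ℂ))
          (Multiset.map (fun i => ((Matrix.isHermitian_conjTranspose_mul_self T).eigenvalues i))
            Finset.univ.val)
        = Multiset.map (fun x : ℝ => (x : ℂ))
          (Multiset.map (fun i => ((Matrix.isHermitian_conjTranspose_mul_self A).eigenvalues i))
            Finset.univ.val) := by
      rw [Multiset.map_map, Multiset.map_map]
      exact h3
    exact Multiset.map_injective Complex.ofReal_injective h4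
  have htrace : traceAbsPow T p = traceAbsPow A p := by
    unfold traceAbsPow singVal
    have h := congrArg
      (fun s : Multiset ℝ => (Multiset.map (fun x => Real.sqrt x ^ p) s).sum) hms
    simp only [Multiset.map_map] at h
    rw [Finset.sum, Finset.sum]
    exact h
  rw [hLHS, ← htrace]
  unfold traceAbsPow singVal
  exact diag_abs_rpow_le T hp
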